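/- arXiv:1303.2295 — 2 statements merged into one kernel-verified Lean document; each statement's English description precedes it below -/
import Mathlib

section
/- Let Ω ⊆ ℝⁿ be a measurable set of finite measure, p : Ω → ℝ measurable with 1 < p⁻ ≤ p(x) ≤ p⁺ for all x, and u ∈ L^{p⁺}(Ω) with u ≠ 0. If ν > 0 satisfies ∫_Ω |u(x)/ν|^{p(x)} / p(x) dx ≤ 1, then ∫_Ω |u(x)|^{p⁻} / p⁻ dx ≤ ν^{p⁻} · (1 + ∫_Ω (1/p⁻ − 1/p(x)) dx). -/
open MeasureTheory

lemma young_aux (t a b : ℝ) (ht : 0 ≤ t) (ha : 0 < a) (hab : a ≤ b) :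
    t ^ a / a ≤ t ^ b / b + (1 / a - 1 / b) := by
  have hb : 0 < b := lt_of_lt_of_le ha hab
  have hw1 : (0:ℝ) ≤ a / b := by positivity
  have hw2 : (0:ℝ) ≤ 1 - a / b := by
    have : a / b ≤ 1 := (div_le_one hb).mpr hab
    linarith
  have hsum : a / b + (1 - a / b) = 1 := by ring
  have hgm := Real.geom_mean_le_arith_mean2_weighted hw1 hw2
    (Real.rpow_nonneg ht b) (zero_le_one) hsum
  have h1 : (t ^ b) ^ (a / b) = t ^ a := by
    rw [← Real.rpow_mul ht]
    congr 1
    field_simp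
  rw [h1, Real.one_rpow, mul_one, mul_one] at hgm
  have heq : (t ^ b / b + (1 / a - 1 / b)) * a = a / b * t ^ b + (1 - a / b) := by
    field_simp
  rw [div_le_iff₀ ha, heq]
  exact hgm

lemma rpow_le_one_add (t s c : ℝ) (ht : 0 ≤ t) (hs : 0 ≤ s) (hsc : s ≤ c) :
    t ^ s ≤ 1 + t ^ c := by
  rcases le_or_gt t 1 with h | h
  · have h1 : t ^ s ≤ 1 := Real.rpow_le_one ht h hs
    have h2 : 0 ≤ t ^ c := Real.rpow_nonneg ht c
    linarith
  · have h1 : t ^ s ≤ t ^ c := Real.rpow_le_rpow_of_exponent_le h.le hsc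
    have h2 : 0 ≤ t ^ s := Real.rpow_nonneg ht s
    linarith

theorem luxemburg_lower_modular (n : ℕ) (Ω : Set (Fin n → ℝ)) (hΩ : MeasurableSet Ω)
    (hfin : volume Ω < ⊤) (p : (Fin n → ℝ) → ℝ) (hpmeas : Measurable p)
    (pm pp : ℝ) (hpm : 1 < pm) (hbounds : ∀ x ∈ Ω, pm ≤ p x ∧ p x ≤ pp)
    (u : (Fin n → ℝ) → ℝ) (hu : MemLp u (ENNReal.ofReal pp) (volume.restrict Ω))
    (hune : ¬ (∀ᵐ x ∂(volume.restrict Ω), u x = 0))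
    (ν : ℝ) (hν : 0 < ν)
    (hmod : ∫ x in Ω, |u x / ν| ^ p x / p x ≤ 1) :
    ∫ x in Ω, |u x| ^ pm / pm ≤ ν ^ pm * (1 + ∫ x in Ω, (1 / pm - 1 / p x)) := by
  have hνnn : (0:ℝ) ≤ ν := hν.le
  have hpm0 : (0:ℝ) < pm := by linarith
  -- Ω is nonempty
  have hΩne : Ω.Nonempty := by
    by_contra h
    rw [Set.not_nonempty_iff_eq_empty] at h
    subst h
    exact hune (by simp)
  obtain ⟨x0, hx0⟩ := hΩne
  have hpp1 : 1 < pp := lt_of_lt_of_le hpm (le_trans (hbounds x0 hx0).1 (hbounds x0 hx0).2)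
  have hpp0 : (0:ℝ) < pp := by linarith
  haveI : IsFiniteMeasure (volume.restrict Ω) :=
    ⟨by rw [Measure.restrict_apply_univ]; exact hfin⟩
  have hum : AEMeasurable u (volume.restrict Ω) := hu.aestronglyMeasurable.aemeasurable
  have hvm : AEMeasurable (fun x => |u x / ν|) (volume.restrict Ω) := measurable_abs.comp_aemeasurable (hum.div_const ν)
  have hgm : AEMeasurable (fun x => |u x / ν| ^ p x) (volume.restrict Ω) :=
    hvm.pow hpmeas.aemeasurable
  -- integrable dominator
  have hIpp : Integrable (fun x => |u x / ν| ^ pp) (volume.restrict Ω) := by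
    have h1 : MemLp (fun x => ν⁻¹ * u x) (ENNReal.ofReal pp) (volume.restrict Ω) :=
      hu.const_mul ν⁻¹
    have h2 := h1.integrable_norm_rpow (ENNReal.ofReal_pos.mpr hpp0).ne' ENNReal.ofReal_ne_top
    simp only [ENNReal.toReal_ofReal hpp0.le, Real.norm_eq_abs] at h2
    refine h2.congr (Filter.Eventually.of_forall fun x => ?_)
    simp [div_eq_mul_inv, mul_comm]
  have hdom : Integrable (fun x => 1 + |u x / ν| ^ pp) (volume.restrict Ω) :=
    (integrable_const 1).add hIpp
  have hIf : Integrable (fun x => |u x / ν| ^ p x / p x) (volume.restrict Ω) := by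
    refine hdom.mono' (hgm.div hpmeas.aemeasurable).aestronglyMeasurable ?_
    filter_upwards [ae_restrict_mem hΩ] with x hx
    have hpx : pm ≤ p x := (hbounds x hx).1
    have habs : (0:ℝ) ≤ |u x / ν| := abs_nonneg _
    have h1 : |u x / ν| ^ p x ≤ 1 + |u x / ν| ^ pp :=
      rpow_le_one_add _ _ _ habs (by linarith) (hbounds x hx).2
    have h2 : (0:ℝ) ≤ |u x / ν| ^ p x := Real.rpow_nonneg habs _
    have hpx1 : 1 ≤ p x := by linarith
    rw [Real.norm_eq_abs, abs_of_nonneg (div_nonneg h2 (by linarith))]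
    have h3 : |u x / ν| ^ p x / p x ≤ |u x / ν| ^ p x := div_le_self h2 hpx1
    linarith
  have hIh : Integrable (fun x => 1 / pm - 1 / p x) (volume.restrict Ω) := by
    refine (integrable_const (1 / pm)).mono'
      ((measurable_const.sub (measurable_const.div hpmeas)).aestronglyMeasurable) ?_
    filter_upwards [ae_restrict_mem hΩ] with x hx
    have h1 : pm ≤ p x := (hbounds x hx).1
    have hpx0 : 0 < p x := by linarith
    have h2 : 1 / p x ≤ 1 / pm := one_div_le_one_div_of_le hpm0 h1
    have h3 : 0 ≤ 1 / p x := by positivity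
    rw [Real.norm_eq_abs, abs_of_nonneg (by linarith)]
    linarith
  have hIlhs : Integrable (fun x => |u x / ν| ^ pm / pm) (volume.restrict Ω) := by
    refine hdom.mono' (((hvm.pow aemeasurable_const).div_const pm).aestronglyMeasurable) ?_
    filter_upwards [ae_restrict_mem hΩ] with x hx
    have habs : (0:ℝ) ≤ |u x / ν| := abs_nonneg _
    have h1 : |u x / ν| ^ pm ≤ 1 + |u x / ν| ^ pp :=
      rpow_le_one_add _ _ _ habs hpm0.le
        (le_trans (hbounds x hx).1 (hbounds x hx).2)
    have h2 : (0:ℝ) ≤ |u x / ν| ^ pm := Real.rpow_nonneg habs _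
    rw [Real.norm_eq_abs, abs_of_nonneg (div_nonneg h2 hpm0.le)]
    have h3 : |u x / ν| ^ pm / pm ≤ |u x / ν| ^ pm := div_le_self h2 hpm.le
    linarith
  have hpt : ∀ᵐ x ∂(volume.restrict Ω),
      |u x / ν| ^ pm / pm ≤ |u x / ν| ^ p x / p x + (1 / pm - 1 / p x) := by
    filter_upwards [ae_restrict_mem hΩ] with x hx
    exact young_aux _ _ _ (abs_nonneg _) hpm0 (hbounds x hx).1
  have key : ∫ x in Ω, |u x / ν| ^ pm / pm ≤
      ∫ x in Ω, (|u x / ν| ^ p x / p x + (1 / pm - 1 / p x)) :=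
    integral_mono_ae hIlhs (hIf.add hIh) hpt
  rw [integral_add hIf hIh] at key
  have key2 : ∫ x in Ω, |u x / ν| ^ pm / pm ≤ 1 + ∫ x in Ω, (1 / pm - 1 / p x) := by
    linarith
  have hrw : ∀ x, |u x| ^ pm / pm = ν ^ pm * (|u x / ν| ^ pm / pm) := by
    intro x
    rw [abs_div, abs_of_pos hν, Real.div_rpow (abs_nonneg _) hνnn]
    have hνp : (0:ℝ) < ν ^ pm := Real.rpow_pos_of_pos hν pm
    field_simp
  calc ∫ x in Ω, |u x| ^ pm / pm
      = ν ^ pm * ∫ x in Ω, |u x / ν| ^ pm / pm := by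
        simp_rw [hrw]; exact integral_const_mul _ _
    _ ≤ ν ^ pm * (1 + ∫ x in Ω, (1 / pm - 1 / p x)) :=
        mul_le_mul_of_nonneg_left key2 (Real.rpow_nonneg hνnn pm)
end

section
/- Let Ω be a measure space and p : Ω → ℝ measurable with 1 < p⁻ ≤ p(x) ≤ p⁺ < ∞. If u, v are measurable functions with ∫_Ω |u(x)|^{p(x)}/p(x) dμ = 1 and ∫_Ω |v(x)|^{p(x)}/p(x) dμ = 1, then ∫_Ω |u(x)|^{p(x)−1} |v(x)| dμ ≤ ∫_Ω |u(x)|^{p(x)} dμ. -/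
open MeasureTheory

theorem modular_holder_variable {α : Type*} [MeasurableSpace α] (μ : Measure α)
    (p : α → ℝ) (hp : Measurable p) (pm pp : ℝ) (hpm : 1 < pm)
    (hbounds : ∀ x, pm ≤ p x ∧ p x ≤ pp)
    (u v : α → ℝ) (hu : Measurable u) (hv : Measurable v)
    (hmu : ∫ x, |u x| ^ p x / p x ∂μ = 1) (hmv : ∫ x, |v x| ^ p x / p x ∂μ = 1) :
    ∫ x, |u x| ^ (p x - 1) * |v x| ∂μ ≤ ∫ x, |u x| ^ p x ∂μ := by
  have hp1 : ∀ x, 1 < p x := fun x => lt_of_lt_of_le hpm (hbounds x).1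
  have hppos : ∀ x, 0 < p x := fun x => lt_trans one_pos (hp1 x)
  -- integrability of the modular integrands (from the fact that the integrals are 1 ≠ 0)
  have hiu' : Integrable (fun x => |u x| ^ p x / p x) μ := by
    by_contra h
    rw [integral_undef h] at hmu
    norm_num at hmu
  have hiv' : Integrable (fun x => |v x| ^ p x / p x) μ := by
    by_contra h
    rw [integral_undef h] at hmv
    norm_num at hmv
  have mu : Measurable (fun x => |u x| ^ p x) := by measurability
  have mv : Measurable (fun x => |v x| ^ p x) := by measurability
  -- integrability of |u|^p
  have hiu : Integrable (fun x => |u x| ^ p x) μ := by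
    refine (hiu'.const_mul pp).mono mu.aestronglyMeasurable (ae_of_all _ fun x => ?_)
    have hnn : 0 ≤ |u x| ^ p x := Real.rpow_nonneg (abs_nonneg _) _
    have hnn' : 0 ≤ |u x| ^ p x / p x := div_nonneg hnn (hppos x).le
    have hppx : (0:ℝ) < pp := lt_of_lt_of_le (hppos x) (hbounds x).2
    rw [Real.norm_of_nonneg hnn, Real.norm_of_nonneg (mul_nonneg hppx.le hnn')]
    calc |u x| ^ p x = p x * (|u x| ^ p x / p x) := by
          rw [mul_comm]; exact (div_mul_cancel₀ _ (hppos x).ne').symm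
      _ ≤ pp * (|u x| ^ p x / p x) := by
          exact mul_le_mul_of_nonneg_right (hbounds x).2 hnn'
  -- the dominating function
  set g : α → ℝ := fun x => (|u x| ^ p x - |u x| ^ p x / p x) + |v x| ^ p x / p x with hg
  have hig : Integrable g μ := (hiu.sub hiu').add hiv'
  have hgnn : ∀ x, 0 ≤ g x := by
    intro x
    have h1 : |u x| ^ p x / p x ≤ |u x| ^ p x := by
      rw [div_le_iff₀ (hppos x)]
      nlinarith [Real.rpow_nonneg (abs_nonneg (u x)) (p x), hp1 x]
    have h2 : 0 ≤ |v x| ^ p x / p x :=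
      div_nonneg (Real.rpow_nonneg (abs_nonneg _) _) (hppos x).le
    simp only [hg]
    linarith
  -- pointwise Young inequality
  have young : ∀ x, |u x| ^ (p x - 1) * |v x| ≤ g x := by
    intro x
    have hconj : (Real.conjExponent (p x)).HolderConjugate (p x) :=
      (Real.HolderConjugate.conjExponent (hp1 x)).symm
    have key := Real.young_inequality_of_nonneg
      (Real.rpow_nonneg (abs_nonneg (u x)) (p x - 1)) (abs_nonneg (v x)) hconj
    have hne : p x - 1 ≠ 0 := sub_ne_zero.2 (ne_of_gt (hp1 x))
    have hpow : (|u x| ^ (p x - 1)) ^ Real.conjExponent (p x) = |u x| ^ p x := by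
      rw [← Real.rpow_mul (abs_nonneg _)]
      congr 1
      rw [Real.conjExponent]
      field_simp
    have hdiv : |u x| ^ p x / Real.conjExponent (p x) = |u x| ^ p x - |u x| ^ p x / p x := by
      rw [Real.conjExponent]
      have h0 : p x ≠ 0 := (hppos x).ne'
      field_simp
    rw [hpow, hdiv] at key
    simpa [hg] using key
  -- integrability of the left-hand side
  have mf : Measurable (fun x => |u x| ^ (p x - 1) * |v x|) := by
    measurability
  have hif : Integrable (fun x => |u x| ^ (p x - 1) * |v x|) μ := by
    refine hig.mono mf.aestronglyMeasurable (ae_of_all _ fun x => ?_)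
    have hnn : 0 ≤ |u x| ^ (p x - 1) * |v x| :=
      mul_nonneg (Real.rpow_nonneg (abs_nonneg _) _) (abs_nonneg _)
    rw [Real.norm_of_nonneg hnn, Real.norm_of_nonneg (hgnn x)]
    exact young x
  -- put it together
  calc ∫ x, |u x| ^ (p x - 1) * |v x| ∂μ ≤ ∫ x, g x ∂μ :=
        integral_mono hif hig young
    _ = ∫ x, |u x| ^ p x ∂μ := by
        have hsub : Integrable (fun x => |u x| ^ p x - |u x| ^ p x / p x) μ := hiu.sub hiu'
        simp only [hg]
        rw [integral_add hsub hiv', integral_sub hiu hiu', hmu, hmv]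
        ring
end
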